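/- Let q be a prime power, F the finite field with q elements, and δ ≥ 3 an odd integer with (δ+1) | (q+1) (so q is odd). Let ρ be a positive integer with gcd(ρ, δ+1) = 1 and gcd(ρ, q) = 1, set n = ρ(δ+1), and assume n > q + 1. Then there exists a linear code C ⊆ F^n of dimension 2ρ − 2 whose minimum Hamming distance (the minimum Hamming weight of a nonzero codeword) is exactly 2δ, and which has (2,δ)-locality. -/

import Mathlib

open Finset

section Aux

variable {F : Type*} [Field F] [DecidableEq F]

/-- The `j`-th coordinate of the block word for message `(a,b)`:
evaluations of `a + b X` at `δ` points, and `b` in the last position. -/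
def blockWord (δ : ℕ) (pts : Fin δ → F) (a b : F) : Fin (δ + 1) → F :=
  fun j => if h : (j : ℕ) < δ then a + b * pts ⟨j, h⟩ else b

lemma blockWord_zero (δ : ℕ) (pts : Fin δ → F) : blockWord δ pts 0 0 = 0 := by
  funext j
  simp only [blockWord, Pi.zero_apply]
  split <;> ring

lemma blockWord_last (δ : ℕ) (pts : Fin δ → F) (a b : F) :
    blockWord δ pts a b (Fin.last δ) = b := by
  simp [blockWord]

lemma blockWord_lt (δ : ℕ) (pts : Fin δ → F) (a b : F) (j : Fin (δ + 1))
    (h : (j : ℕ) < δ) : blockWord δ pts a b j = a + b * pts ⟨j, h⟩ := by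
  simp only [blockWord]
  rw [dif_pos h]

lemma filter_lt_card (δ : ℕ) :
    (Finset.univ.filter fun j : Fin (δ + 1) => (j : ℕ) < δ).card = δ := by
  have h : (Finset.univ.filter fun j : Fin (δ + 1) => (j : ℕ) < δ)
      = Finset.univ.erase (Fin.last δ) := by
    rw [← Finset.filter_ne']
    apply Finset.filter_congr
    intro j _
    rw [← Fin.lt_last_iff_ne_last, Fin.lt_def, Fin.val_last]
  rw [h, Finset.card_erase_of_mem (Finset.mem_univ _)]
  simp

lemma blockWord_weight_b_zero (δ : ℕ) (pts : Fin δ → F) {a : F} (ha : a ≠ 0) :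
    (Finset.univ.filter fun j => blockWord δ pts a 0 j ≠ 0).card = δ := by
  have h : ∀ j : Fin (δ + 1), (blockWord δ pts a 0 j ≠ 0) ↔ (j : ℕ) < δ := by
    intro j
    by_cases h : (j : ℕ) < δ
    · rw [blockWord_lt δ pts a 0 j h]
      simp [h, ha]
    · simp [blockWord, h]
  rw [Finset.filter_congr fun j _ => h j]
  exact filter_lt_card δ

lemma blockWord_weight_ge (δ : ℕ) (pts : Fin δ → F) (hinj : Function.Injective pts)
    {a b : F} (hab : ¬(a = 0 ∧ b = 0)) :
    δ ≤ (Finset.univ.filter fun j => blockWord δ pts a b j ≠ 0).card := by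
  by_cases hb : b = 0
  · subst hb
    have ha : a ≠ 0 := fun h => hab ⟨h, rfl⟩
    rw [blockWord_weight_b_zero δ pts ha]
  · have key : ∀ z : Fin (δ + 1), blockWord δ pts a b z = 0 →
        ∃ h : (z : ℕ) < δ, pts ⟨z, h⟩ = -a * b⁻¹ := by
      intro z hz
      by_cases h : (z : ℕ) < δ
      · refine ⟨h, ?_⟩
        rw [blockWord_lt δ pts a b z h] at hz
        field_simp
        linear_combination hz
      · exfalso
        apply hb
        rw [← hz]
        simp [blockWord, h]
    have h1 : (Finset.univ.filter fun j : Fin (δ + 1) =>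
        ¬ blockWord δ pts a b j ≠ 0).card ≤ 1 := by
      rw [Finset.card_le_one]
      intro x hx y hy
      simp only [Finset.mem_filter, not_not] at hx hy
      obtain ⟨hx1, hx2⟩ := key x hx.2
      obtain ⟨hy1, hy2⟩ := key y hy.2
      have hxy := hinj (hx2.trans hy2.symm)
      simp only [Fin.mk.injEq] at hxy
      exact Fin.ext hxy
    have h2 := Finset.card_filter_add_card_filter_not
      (s := (Finset.univ : Finset (Fin (δ + 1))))
      (p := fun j => blockWord δ pts a b j ≠ 0)
    simp only [Finset.card_univ, Fintype.card_fin] at h2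
    omega

/-- The full encoding map: block `k` carries `blockWord` of `(x.1 k, x.2 k)`. -/
def enc (δ ρ : ℕ) (pts : Fin δ → F) :
    ((Fin ρ → F) × (Fin ρ → F)) →ₗ[F] (Fin (ρ * (δ + 1)) → F) where
  toFun x := fun i => blockWord δ pts (x.1 (finProdFinEquiv.symm i).1)
    (x.2 (finProdFinEquiv.symm i).1) (finProdFinEquiv.symm i).2
  map_add' x y := by
    funext i
    simp only [blockWord, Prod.fst_add, Prod.snd_add, Pi.add_apply]
    split <;> ring
  map_smul' c x := by
    funext i
    simp only [blockWord, Prod.smul_fst, Prod.smul_snd, Pi.smul_apply, smul_eq_mul,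
      RingHom.id_apply]
    split <;> ring

lemma enc_apply (δ ρ : ℕ) (pts : Fin δ → F) (x : (Fin ρ → F) × (Fin ρ → F))
    (k : Fin ρ) (j : Fin (δ + 1)) :
    enc δ ρ pts x (finProdFinEquiv (k, j)) = blockWord δ pts (x.1 k) (x.2 k) j := by
  simp only [enc, LinearMap.coe_mk, AddHom.coe_mk, Equiv.symm_apply_apply]

lemma hamming_sum (δ ρ : ℕ) (c : Fin (ρ * (δ + 1)) → F) :
    hammingNorm c = ∑ k : Fin ρ,
      (Finset.univ.filter fun j : Fin (δ + 1) => c (finProdFinEquiv (k, j)) ≠ 0).card := by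
  have he := Fintype.sum_equiv finProdFinEquiv
    (fun p : Fin ρ × Fin (δ + 1) => if c (finProdFinEquiv p) ≠ 0 then 1 else 0)
    (fun i => if c i ≠ 0 then 1 else 0) (fun p => rfl)
  rw [hammingNorm, Finset.card_filter, ← he, Fintype.sum_prod_type]
  simp [Finset.card_filter]

/-- Sum functional. -/
def sumL (F : Type*) [Field F] (ρ : ℕ) : (Fin ρ → F) →ₗ[F] F where
  toFun a := ∑ k, a k
  map_add' a b := by simp [Finset.sum_add_distrib]
  map_smul' c a := by simp [Finset.mul_sum]

lemma sumL_apply (ρ : ℕ) (a : Fin ρ → F) : sumL F ρ a = ∑ k, a k := rfl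

end Aux

/-- A code `C ⊆ F^n` has `(r,δ)`-locality if each coordinate has a repair set `S`
of size at most `r+δ-1` such that any codeword that is nonzero somewhere in `S`
has at least `δ` nonzero coordinates inside `S`. -/
def HasRDeltaLocality {F : Type*} [Field F] [DecidableEq F] {n : ℕ}
    (C : Set (Fin n → F)) (r δ : ℕ) : Prop :=
  ∀ ℓ : Fin n, ∃ S : Finset (Fin n), ℓ ∈ S ∧ S.card ≤ r + δ - 1 ∧
    ∀ c ∈ C, (∃ i ∈ S, c i ≠ 0) → δ ≤ (S.filter fun i => c i ≠ 0).card

/-- Theorem 13: for `δ` odd with `(δ+1) ∣ (q+1)` there is a distance-optimal `(2,δ)`-LRC with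
parameters `[n, 2ρ-2, 2δ]_q`, where `n = ρ(δ+1)` is unbounded. -/
theorem distance_optimal_lrc_q_add_one_odd
    {F : Type*} [Field F] [Fintype F] [DecidableEq F] (q : ℕ)
    (hq : Fintype.card F = q)
    (δ : ℕ) (hδ : 3 ≤ δ) (hOdd : Odd δ) (hdvd : (δ + 1) ∣ (q + 1))
    (ρ : ℕ) (hρ : 0 < ρ) (hcop1 : Nat.Coprime ρ (δ + 1)) (hcop2 : Nat.Coprime ρ q)
    (n : ℕ) (hn : n = ρ * (δ + 1)) (hbig : q + 1 < n) :
    ∃ C : Submodule F (Fin n → F),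
      Module.finrank F ↥C = 2 * ρ - 2 ∧
      (∀ c ∈ C, c ≠ 0 → 2 * δ ≤ hammingNorm c) ∧
      (∃ c ∈ C, c ≠ 0 ∧ hammingNorm c = 2 * δ) ∧
      HasRDeltaLocality (C : Set (Fin n → F)) 2 δ := by
  subst hn
  have hδ0 : 0 < δ := by omega
  have hdq : δ + 1 ≤ q + 1 := Nat.le_of_dvd (by omega) hdvd
  obtain ⟨pts⟩ : Nonempty (Fin δ ↪ F) :=
    Function.Embedding.nonempty_of_card_le (by simp [hq]; omega)
  have hinj : Function.Injective (⇑pts) := pts.injective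
  have hρ2 : 2 ≤ ρ := by
    rcases Nat.lt_or_ge ρ 2 with h | h
    · interval_cases ρ <;> omega
    · exact h
  set φ := enc δ ρ (⇑pts) with hφ
  set V : Submodule F ((Fin ρ → F) × (Fin ρ → F)) :=
    (LinearMap.ker (sumL F ρ)).prod (LinearMap.ker (sumL F ρ)) with hV
  refine ⟨Submodule.map φ V, ?_, ?_, ?_, ?_⟩
  · -- finrank
    have hsurj : Function.Surjective (sumL F ρ) := by
      intro y
      refine ⟨Pi.single ⟨0, hρ⟩ y, ?_⟩
      rw [sumL_apply]
      simp [Finset.sum_pi_single']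
    have hφinj : Function.Injective φ := by
      rw [← LinearMap.ker_eq_bot, LinearMap.ker_eq_bot']
      intro x hx
      obtain ⟨x1, x2⟩ := x
      have hb : ∀ k, x2 k = 0 := by
        intro k
        have h := congrFun hx (finProdFinEquiv (k, Fin.last δ))
        rwa [hφ, enc_apply, blockWord_last, Pi.zero_apply] at h
      have ha : ∀ k, x1 k = 0 := by
        intro k
        have h := congrFun hx (finProdFinEquiv (k, ⟨0, by omega⟩))
        rw [hφ, enc_apply] at h
        dsimp only at h
        rw [blockWord_lt δ (⇑pts) _ _ _ (by simpa using hδ0), hb k] at h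
        simpa using h
      simp only [Prod.mk_eq_zero]
      exact ⟨funext ha, funext hb⟩
    have hVrank : Module.finrank F ↥V = 2 * ρ - 2 := by
      have hVk : V = LinearMap.ker ((sumL F ρ).prodMap (sumL F ρ)) :=
        (LinearMap.ker_prodMap _ _).symm
      have hsurj2 : Function.Surjective ((sumL F ρ).prodMap (sumL F ρ)) := by
        rw [LinearMap.coe_prodMap]
        exact hsurj.prodMap hsurj
      have h2 := LinearMap.finrank_range_add_finrank_ker ((sumL F ρ).prodMap (sumL F ρ))
      rw [LinearMap.range_eq_top.mpr hsurj2, finrank_top, Module.finrank_prod,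
        Module.finrank_prod, Module.finrank_self, Module.finrank_fin_fun] at h2
      rw [hVk]
      omega
    have hC : Submodule.map φ V = LinearMap.range (φ ∘ₗ V.subtype) := by
      rw [LinearMap.range_comp, Submodule.range_subtype]
    rw [hC, LinearMap.finrank_range_of_inj
      (show Function.Injective ⇑(φ ∘ₗ V.subtype) by
        rw [LinearMap.coe_comp]
        exact hφinj.comp (Submodule.injective_subtype V))]
    exact hVrank
  · -- distance lower bound
    intro c hc hc0
    obtain ⟨x, hxV, rfl⟩ := Submodule.mem_map.mp hc
    obtain ⟨hsa, hsb⟩ := Submodule.mem_prod.mp hxV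
    rw [LinearMap.mem_ker, sumL_apply] at hsa hsb
    have hex : ∃ k, ¬(x.1 k = 0 ∧ x.2 k = 0) := by
      by_contra h
      push_neg at h
      apply hc0
      have hx0 : x = 0 := Prod.ext (funext fun k => (h k).1) (funext fun k => (h k).2)
      rw [hx0, map_zero]
    obtain ⟨k0, hk0⟩ := hex
    have hex2 : ∃ k1, k1 ≠ k0 ∧ ¬(x.1 k1 = 0 ∧ x.2 k1 = 0) := by
      by_contra h
      push_neg at h
      refine hk0 ⟨?_, ?_⟩
      · rwa [Finset.sum_eq_single k0 (fun k _ hk => (h k hk).1) (by simp)] at hsa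
      · rwa [Finset.sum_eq_single k0 (fun k _ hk => (h k hk).2) (by simp)] at hsb
    obtain ⟨k1, hk1ne, hk1⟩ := hex2
    rw [hamming_sum]
    have hterm : ∀ k, ¬(x.1 k = 0 ∧ x.2 k = 0) →
        δ ≤ (Finset.univ.filter fun j : Fin (δ + 1) =>
          φ x (finProdFinEquiv (k, j)) ≠ 0).card := by
      intro k hk
      have heq : (Finset.univ.filter fun j : Fin (δ + 1) =>
          φ x (finProdFinEquiv (k, j)) ≠ 0)
          = Finset.univ.filter fun j => blockWord δ (⇑pts) (x.1 k) (x.2 k) j ≠ 0 := by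
        apply Finset.filter_congr
        intro j _
        rw [hφ, enc_apply]
      rw [heq]
      exact blockWord_weight_ge δ (⇑pts) hinj hk
    calc 2 * δ = δ + δ := by omega
      _ ≤ _ + _ := Nat.add_le_add (hterm k1 hk1) (hterm k0 hk0)
      _ = ∑ k ∈ ({k1, k0} : Finset (Fin ρ)), (Finset.univ.filter fun j : Fin (δ + 1) =>
          φ x (finProdFinEquiv (k, j)) ≠ 0).card :=
        (Finset.sum_pair (f := fun k => (Finset.univ.filter fun j : Fin (δ + 1) =>
          φ x (finProdFinEquiv (k, j)) ≠ 0).card) hk1ne).symm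
      _ ≤ _ := Finset.sum_le_sum_of_subset (Finset.subset_univ _)
  · -- a codeword of weight exactly 2δ
    have hne : (⟨0, by omega⟩ : Fin ρ) ≠ ⟨1, by omega⟩ := by
      simp [Fin.ext_iff]
    set k0 : Fin ρ := ⟨0, by omega⟩
    set k1 : Fin ρ := ⟨1, by omega⟩
    set a0 : Fin ρ → F := Pi.single k0 1 - Pi.single k1 1 with ha0
    have ha0k0 : a0 k0 = 1 := by
      have h1 : (Pi.single k1 1 : Fin ρ → F) k0 = 0 := by rw [Pi.single_eq_of_ne hne]
      simp [ha0, h1]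
    have ha0k1 : a0 k1 = -1 := by
      have h1 : (Pi.single k0 1 : Fin ρ → F) k1 = 0 := by rw [Pi.single_eq_of_ne hne.symm]
      simp [ha0, h1]
    have ha0other : ∀ k, k ≠ k0 → k ≠ k1 → a0 k = 0 := by
      intro k h0 h1
      simp [ha0, Pi.single_eq_of_ne h0, Pi.single_eq_of_ne h1]
    have hmem : (a0, (0 : Fin ρ → F)) ∈ V := by
      refine Submodule.mem_prod.mpr ⟨?_, ?_⟩
      · show sumL F ρ a0 = 0
        rw [ha0, map_sub, sumL_apply, sumL_apply]
        simp [Finset.sum_pi_single']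
      · exact LinearMap.mem_ker.mpr (map_zero _)
    refine ⟨φ (a0, 0), Submodule.mem_map.mpr ⟨(a0, 0), hmem, rfl⟩, ?_, ?_⟩
    · intro h
      have h0 := congrFun h (finProdFinEquiv (k0, ⟨0, by omega⟩))
      rw [hφ, enc_apply, blockWord_lt δ (⇑pts) _ _ _ (by simpa using hδ0),
        Pi.zero_apply] at h0
      simp only [ha0k0] at h0
      simp at h0
    · rw [hamming_sum]
      have hterm : ∀ k, (Finset.univ.filter fun j : Fin (δ + 1) =>
          φ (a0, 0) (finProdFinEquiv (k, j)) ≠ 0)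
          = Finset.univ.filter fun j => blockWord δ (⇑pts) (a0 k) (0:F) j ≠ 0 := by
        intro k
        apply Finset.filter_congr
        intro j _
        rw [hφ, enc_apply]
        exact Iff.rfl
      have hzero : ∀ k ∈ Finset.univ, k ∉ ({k1, k0} : Finset (Fin ρ)) →
          (Finset.univ.filter fun j : Fin (δ + 1) =>
            φ (a0, 0) (finProdFinEquiv (k, j)) ≠ 0).card = 0 := by
        intro k _ hk
        simp only [Finset.mem_insert, Finset.mem_singleton] at hk
        push_neg at hk
        rw [hterm k, ha0other k hk.2 hk.1, blockWord_zero]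
        simp
      have hA : a0 k0 ≠ 0 := by rw [ha0k0]; exact one_ne_zero
      have hB : a0 k1 ≠ 0 := by rw [ha0k1]; exact neg_ne_zero.mpr one_ne_zero
      rw [← Finset.sum_subset (Finset.subset_univ ({k1, k0} : Finset (Fin ρ))) hzero,
        Finset.sum_pair hne.symm, hterm k0, hterm k1,
        blockWord_weight_b_zero δ (⇑pts) hB, blockWord_weight_b_zero δ (⇑pts) hA]
      omega
  · -- locality
    intro ℓ
    set k : Fin ρ := (finProdFinEquiv.symm ℓ).1
    have hfinj : Function.Injective (fun j' : Fin (δ + 1) => finProdFinEquiv (k, j')) := by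
      intro j1 j2 h
      have := finProdFinEquiv.injective h
      exact (Prod.mk.injEq _ _ _ _).mp this |>.2
    refine ⟨Finset.univ.image (fun j' : Fin (δ + 1) => finProdFinEquiv (k, j')), ?_, ?_, ?_⟩
    · refine Finset.mem_image.mpr ⟨(finProdFinEquiv.symm ℓ).2, Finset.mem_univ _, ?_⟩
      exact Equiv.apply_symm_apply _ _
    · rw [Finset.card_image_of_injective _ hfinj]
      simp
    · rintro c hc ⟨i, hiS, hci⟩
      obtain ⟨x, hxV, rfl⟩ := Submodule.mem_map.mp hc
      obtain ⟨j', -, rfl⟩ := Finset.mem_image.mp hiS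
      have hkne : ¬(x.1 k = 0 ∧ x.2 k = 0) := by
        rintro ⟨h1, h2⟩
        apply hci
        rw [hφ, enc_apply, h1, h2, blockWord_zero]
        rfl
      rw [Finset.filter_image, Finset.card_image_of_injective _ hfinj]
      have heq : (Finset.univ.filter fun j'' : Fin (δ + 1) =>
          φ x (finProdFinEquiv (k, j'')) ≠ 0)
          = Finset.univ.filter fun j'' => blockWord δ (⇑pts) (x.1 k) (x.2 k) j'' ≠ 0 := by
        apply Finset.filter_congr
        intro j'' _
        rw [hφ, enc_apply]
      rw [heq]
      exact blockWord_weight_ge δ (⇑pts) hinj hkne
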